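/- arXiv:2501.10162 — 2 statements merged into one kernel-verified Lean document; each statement's English description precedes it below -/
import Mathlib

section
/- Let L ≥ 1, and let σ : ℝ → ℝ be a convex and monotonically non-decreasing function. For l = 0, …, L let W^(l) be real matrices with nonnegative entries (of compatible sizes, with W^(0) unused), let L^(l) be arbitrary real matrices, and let b^(l) be real vectors. Define the Input Convex Neural Network map by x^0 = x, x^1 = σ(L^(0) x^0 + b^(0)) applied componentwise, x^l = σ(W^(l−1) x^(l−1) + L^(l−1) x^0 + b^(l−1)) componentwise for 2 ≤ l ≤ L, and y = W^(L) x^L + L^(L) x^0 + b^(L). Then every component of the output map x ↦ y is a convex function of the input x ∈ ℝ^(N₀). -/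
open Matrix

/-- The hidden layers of an Input Convex Neural Network:
`x^0 = x`, `x^1 = σ(L^(0) x^0 + b^(0))`,
`x^l = σ(W^(l-1) x^(l-1) + L^(l-1) x^0 + b^(l-1))` for `2 ≤ l`,
with `σ` applied componentwise. -/
noncomputable def icnnHidden (σ : ℝ → ℝ) (N : ℕ → ℕ)
    (W : (l : ℕ) → Matrix (Fin (N (l + 1))) (Fin (N l)) ℝ)
    (Lm : (l : ℕ) → Matrix (Fin (N (l + 1))) (Fin (N 0)) ℝ)
    (b : (l : ℕ) → Fin (N (l + 1)) → ℝ)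
    (x : Fin (N 0) → ℝ) : (l : ℕ) → Fin (N l) → ℝ
  | 0 => x
  | 1 => fun i => σ (((Lm 0).mulVec x + b 0) i)
  | (l + 2) => fun i =>
      σ (((W (l + 1)).mulVec (icnnHidden σ N W Lm b x (l + 1)) +
          (Lm (l + 1)).mulVec x + b (l + 1)) i)

section Aux

variable {E : Type*} [AddCommGroup E] [Module ℝ E]

lemma aux_linear_convexOn (f : E →ₗ[ℝ] ℝ) : ConvexOn ℝ Set.univ f :=
  ⟨convex_univ, fun x _ y _ a c _ _ _ => by
    simp [f.map_add, f.map_smul, smul_eq_mul]⟩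

lemma aux_comp_convex {σ : ℝ → ℝ} (hσconv : ConvexOn ℝ Set.univ σ)
    (hσmono : Monotone σ) {f : E → ℝ} (hf : ConvexOn ℝ Set.univ f) :
    ConvexOn ℝ Set.univ (fun x => σ (f x)) := by
  refine ⟨convex_univ, fun x _ y _ a c ha hc hac => ?_⟩
  calc σ (f (a • x + c • y)) ≤ σ (a * f x + c * f y) :=
        hσmono (by simpa using hf.2 (Set.mem_univ x) (Set.mem_univ y) ha hc hac)
    _ ≤ a * σ (f x) + c * σ (f y) := by
        simpa using hσconv.2 (Set.mem_univ (f x)) (Set.mem_univ (f y)) ha hc hac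

lemma aux_sum_convex {ι : Type*} (t : Finset ι) (c : ι → ℝ) (hc : ∀ j, 0 ≤ c j)
    (f : ι → E → ℝ) (hf : ∀ j, ConvexOn ℝ Set.univ (f j)) :
    ConvexOn ℝ Set.univ (fun x => ∑ j ∈ t, c j * f j x) := by
  classical
  induction t using Finset.induction with
  | empty => simpa using convexOn_const 0 convex_univ
  | insert _ _ hj ih =>
      simp only [Finset.sum_insert hj]
      exact ConvexOn.add (by simpa [smul_eq_mul] using (hf _).smul (hc _)) ih

lemma aux_affine_convex {m n : ℕ} (M : Matrix (Fin m) (Fin n) ℝ) (v : Fin m → ℝ)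
    (i : Fin m) :
    ConvexOn ℝ Set.univ (fun x : Fin n → ℝ => M.mulVec x i + v i) :=
  (aux_linear_convexOn ((LinearMap.proj i).comp M.mulVecLin)).add
    (convexOn_const _ convex_univ)

lemma aux_hidden_convex (σ : ℝ → ℝ)
    (hσconv : ConvexOn ℝ Set.univ σ) (hσmono : Monotone σ) (N : ℕ → ℕ)
    (W : (l : ℕ) → Matrix (Fin (N (l + 1))) (Fin (N l)) ℝ)
    (Lm : (l : ℕ) → Matrix (Fin (N (l + 1))) (Fin (N 0)) ℝ)
    (b : (l : ℕ) → Fin (N (l + 1)) → ℝ) :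
    ∀ l, (∀ m, m + 1 ≤ l → ∀ i j, 0 ≤ W m i j) →
      ∀ i, ConvexOn ℝ Set.univ (fun x => icnnHidden σ N W Lm b x l i) := by
  intro l
  induction l with
  | zero => intro _ i; exact aux_linear_convexOn (LinearMap.proj (R := ℝ) (φ := fun _ : Fin (N 0) => ℝ) i)
  | succ l ih =>
    cases l with
    | zero =>
        intro _ i
        simp only [icnnHidden, Pi.add_apply]
        exact aux_comp_convex hσconv hσmono (aux_affine_convex (Lm 0) (b 0) i)
    | succ l =>
        intro h i
        simp only [icnnHidden, Pi.add_apply]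
        apply aux_comp_convex hσconv hσmono
        have hsum : ConvexOn ℝ Set.univ
            (fun x : Fin (N 0) → ℝ =>
              ∑ j, W (l + 1) i j * icnnHidden σ N W Lm b x (l + 1) j) :=
          aux_sum_convex _ _ (fun j => h (l + 1) le_rfl i j) _
            (fun j => ih (fun m hm => h m (hm.trans (Nat.le_succ _))) j)
        have := hsum.add (aux_affine_convex (Lm (l + 1)) (b (l + 1)) i)
        convert this using 2 with x
        · rfl
        · rfl
        · rfl
        simp [Matrix.mulVec, dotProduct]
        ring

end Aux

/-- Every component of the output `y = W^(L) x^L + L^(L) x^0 + b^(L)` of an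
Input Convex Neural Network with `L ≥ 1` hidden layers, convex non-decreasing
activation `σ`, and nonnegative weight matrices `W^(l)`, is a convex function
of the input `x ∈ ℝ^(N₀)`. -/
theorem icnn_output_convex (σ : ℝ → ℝ)
    (hσconv : ConvexOn ℝ Set.univ σ) (hσmono : Monotone σ)
    (L : ℕ) (hL : 1 ≤ L) (N : ℕ → ℕ)
    (W : (l : ℕ) → Matrix (Fin (N (l + 1))) (Fin (N l)) ℝ)
    (hW : ∀ l, l ≤ L → ∀ i j, 0 ≤ W l i j)
    (Lm : (l : ℕ) → Matrix (Fin (N (l + 1))) (Fin (N 0)) ℝ)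
    (b : (l : ℕ) → Fin (N (l + 1)) → ℝ) :
    ∀ i : Fin (N (L + 1)),
      ConvexOn ℝ Set.univ fun x : Fin (N 0) → ℝ =>
        ((W L).mulVec (icnnHidden σ N W Lm b x L) + (Lm L).mulVec x + b L) i := by
  intro i
  have hsum : ConvexOn ℝ Set.univ
      (fun x : Fin (N 0) → ℝ => ∑ j, W L i j * icnnHidden σ N W Lm b x L j) :=
    aux_sum_convex _ _ (fun j => hW L le_rfl i j) _
      (fun j => aux_hidden_convex σ hσconv hσmono N W Lm b L
        (fun m hm => hW m (Nat.le_of_succ_le hm) ) j)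
  have := hsum.add (aux_affine_convex (Lm L) (b L) i)
  convert this using 2 with x
  · rfl
  simp [Matrix.mulVec, dotProduct]
  ring
end

section
/- Let M_X and M_Y be symmetric positive definite 2×2 real matrices. Then there exists a rotation matrix R_θ = [[cos θ, −sin θ], [sin θ, cos θ]] such that the matrix A = M_Y R_θ M_X⁻¹ is symmetric positive definite. -/
open Matrix Real

lemma posDef_of_posSemidef_det_ne_zero {n : Type*} [Fintype n] [DecidableEq n]
    {S : Matrix n n ℝ} (hS : S.PosSemidef) (hdet : S.det ≠ 0) : S.PosDef := by
  refine PosDef.of_dotProduct_mulVec_pos hS.1 (fun x hx => ?_)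
  have h1 : 0 ≤ star x ⬝ᵥ S *ᵥ x := hS.dotProduct_mulVec_nonneg x
  have h2 : star x ⬝ᵥ S *ᵥ x ≠ 0 := by
    intro h
    rw [hS.dotProduct_mulVec_zero_iff] at h
    have hinj := Matrix.mulVec_injective_iff_isUnit.2 ((Matrix.isUnit_iff_isUnit_det S).2 (isUnit_iff_ne_zero.2 hdet))
    exact hx (hinj (by simpa using h))
  simpa using lt_of_le_of_ne h1 (Ne.symm h2)

lemma congr_posDef {n : Type*} [Fintype n] [DecidableEq n]
    {S B : Matrix n n ℝ} (hS : S.PosDef) (hB : B.det ≠ 0) : (B * S * Bᵀ).PosDef := by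
  apply posDef_of_posSemidef_det_ne_zero
  · have := hS.posSemidef.mul_mul_conjTranspose_same B
    simpa using this
  · have hSd := hS.det_pos
    simp only [Matrix.det_mul, Matrix.det_transpose]
    positivity

/-- For symmetric positive definite `2×2` real matrices `M_X, M_Y`, there exists a
rotation matrix `R_θ` such that `M_Y R_θ M_X⁻¹` is symmetric positive definite. -/
theorem exists_rotation_posDef (MX MY : Matrix (Fin 2) (Fin 2) ℝ)
    (hMX : MX.PosDef) (hMY : MY.PosDef) :
    ∃ θ : ℝ,
      (MY * !![Real.cos θ, -Real.sin θ; Real.sin θ, Real.cos θ] * MX⁻¹).PosDef := by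
  have hMXs : MXᵀ = MX := hMX.isHermitian
  have hMXd : MX.det ≠ 0 := ne_of_gt hMX.det_pos
  have hMYd : MY.det ≠ 0 := ne_of_gt hMY.det_pos
  set C : Matrix (Fin 2) (Fin 2) ℝ := MX * MY with hC
  have hCdpos : 0 < C.det := by
    simp only [hC, Matrix.det_mul]; exact mul_pos hMX.det_pos hMY.det_pos
  have hCd : C.det ≠ 0 := ne_of_gt hCdpos
  have hP : (C * Cᵀ).PosDef := by
    apply posDef_of_posSemidef_det_ne_zero
    · simpa using Matrix.posSemidef_self_mul_conjTranspose C
    · simp only [Matrix.det_mul, Matrix.det_transpose]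
      exact mul_ne_zero hCd hCd
  set S := (open scoped MatrixOrder in CFC.sqrt (C * Cᵀ)) with hSdef
  have hSsq : S * S = C * Cᵀ := by
    open scoped MatrixOrder in exact CFC.sqrt_mul_sqrt_self _ hP.posSemidef.nonneg
  have hSdet : S.det ≠ 0 := by
    intro h
    have : (C * Cᵀ).det = 0 := by rw [← hSsq, Matrix.det_mul, h, mul_zero]
    rw [Matrix.det_mul, Matrix.det_transpose] at this
    exact mul_ne_zero hCd hCd this
  have hS : S.PosDef := posDef_of_posSemidef_det_ne_zero
    (by open scoped MatrixOrder in exact (CFC.sqrt_nonneg _).posSemidef) hSdet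
  have hSs : Sᵀ = S := hS.isHermitian
  set U := C⁻¹ * S with hU
  have hSinv : S * S⁻¹ = 1 := Matrix.mul_nonsing_inv S (isUnit_iff_ne_zero.2 hSdet)
  have hSinv' : S⁻¹ * S = 1 := Matrix.nonsing_inv_mul S (isUnit_iff_ne_zero.2 hSdet)
  -- U orthogonal
  have hUo : Uᵀ * U = 1 := by
    have h1 : Uᵀ * U = S * ((Cᵀ)⁻¹ * C⁻¹) * S := by
      rw [hU, Matrix.transpose_mul, Matrix.transpose_nonsing_inv, hSs]
      simp [Matrix.mul_assoc]
    have h2 : (Cᵀ)⁻¹ * C⁻¹ = S⁻¹ * S⁻¹ := by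
      rw [← Matrix.mul_inv_rev, ← hSsq, Matrix.mul_inv_rev]
    rw [h1, h2, show S * (S⁻¹ * S⁻¹) * S = (S * S⁻¹) * (S⁻¹ * S) by
      simp [Matrix.mul_assoc], hSinv, hSinv', Matrix.one_mul]
  have hUdet : U.det = 1 := by
    have h2 : U.det ^ 2 = 1 := by
      have := congrArg Matrix.det hUo
      simpa [Matrix.det_mul, sq, mul_comm] using this
    have hpos : 0 < U.det := by
      rw [hU, Matrix.det_mul, Matrix.det_nonsing_inv, Ring.inverse_eq_inv']
      exact mul_pos (inv_pos.2 hCdpos) hS.det_pos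
    nlinarith [sq_nonneg (U.det - 1)]
  -- the candidate matrix equals MX⁻¹ * S * MX⁻¹, which is posdef
  have hA : MY * U * MX⁻¹ = MX⁻¹ * S * MX⁻¹ := by
    rw [hU, hC, Matrix.mul_inv_rev, ← Matrix.mul_assoc, ← Matrix.mul_assoc,
      Matrix.mul_nonsing_inv MY (isUnit_iff_ne_zero.2 hMYd), Matrix.one_mul]
  have hApd : (MX⁻¹ * S * MX⁻¹).PosDef := by
    have hinvd : (MX⁻¹).det ≠ 0 := by
      rw [Matrix.det_nonsing_inv, Ring.inverse_eq_inv']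
      exact inv_ne_zero hMXd
    have h := congr_posDef hS hinvd
    rwa [Matrix.transpose_nonsing_inv, hMXs] at h
  -- U is a rotation
  set a := U 0 0 with ha
  set b := U 0 1 with hb
  set c := U 1 0 with hc
  set d := U 1 1 with hd
  have e1 : a * a + c * c = 1 := by
    have := congrFun (congrFun hUo 0) 0
    simpa [Matrix.mul_apply, Fin.sum_univ_two, Matrix.transpose_apply] using this
  have e2 : a * b + c * d = 0 := by
    have := congrFun (congrFun hUo 0) 1
    simpa [Matrix.mul_apply, Fin.sum_univ_two, Matrix.transpose_apply] using this
  have e3 : b * b + d * d = 1 := by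
    have := congrFun (congrFun hUo 1) 1
    simpa [Matrix.mul_apply, Fin.sum_univ_two, Matrix.transpose_apply] using this
  have edet : a * d - b * c = 1 := by
    have := hUdet
    rw [Matrix.det_fin_two] at this
    linarith [this]
  have hda : d = a := by linear_combination a * edet + c * e2 - d * e1
  have hbc : b = -c := by linear_combination -b * edet + d * e2 - c * e3
  have ha1 : a ≤ 1 := by nlinarith [e1]
  have ha2 : -1 ≤ a := by nlinarith [e1]
  set θ := if 0 ≤ c then Real.arccos a else -Real.arccos a with hθ
  have hcos : Real.cos θ = a := by
    rw [hθ]; split_ifs <;> simp [Real.cos_arccos ha2 ha1]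
  have hsq : Real.sqrt (1 - a ^ 2) = |c| := by
    rw [show (1 : ℝ) - a ^ 2 = c ^ 2 by nlinarith [e1], Real.sqrt_sq_eq_abs]
  have hsin : Real.sin θ = c := by
    rw [hθ]; split_ifs with h
    · rw [Real.sin_arccos, hsq, abs_of_nonneg h]
    · rw [Real.sin_neg, Real.sin_arccos, hsq, abs_of_neg (lt_of_not_ge h)]; ring
  refine ⟨θ, ?_⟩
  have hUeq : !![Real.cos θ, -Real.sin θ; Real.sin θ, Real.cos θ] = U := by
    rw [hcos, hsin, Matrix.eta_fin_two U, ← ha, ← hb, ← hc, ← hd, hda, hbc]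
  rw [hUeq, hA]
  exact hApd
end
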